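/- Let n satisfy Assumption 1 with δ* > 0, and let η be a real number with 0 ≤ η < δ*. Then ∫_0^t n_τ e^{−ητ} dτ ∼ n_t e^{−ηt}/(δ*−η) as t → ∞; that is, lim_{t→∞} (δ*−η)·e^{ηt}·(∫_0^t n_τ e^{−ητ} dτ)/n_t = 1. In particular, taking η = 0, lim_{t→∞} n_t/a_t = δ* where a_t = ∫_0^t n_τ dτ. -/

import Mathlib

section Aux
open Filter Real MeasureTheory Set
variable {n : ℝ → ℝ}

lemma A1.mono (hz : ∀ τ : ℝ, τ < 0 → n τ = 0)
    (hrc : Filter.Tendsto n (nhdsWithin 0 (Set.Ioi 0)) (nhds (n 0)))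
    (hpos : ∀ τ : ℝ, 0 < τ → 0 < n τ)
    (hmono : MonotoneOn n (Set.Ioi 0)) : Monotone n := by
  have h0 : 0 ≤ n 0 := by
    refine ge_of_tendsto hrc ?_
    filter_upwards [self_mem_nhdsWithin] with τ hτ
    exact (hpos τ hτ).le
  have hnonneg : ∀ t, 0 ≤ n t := by
    intro t
    rcases lt_trichotomy t 0 with h|h|h
    · rw [hz t h]
    · rw [h]; exact h0
    · exact (hpos t h).le
  have h0le : ∀ b : ℝ, 0 < b → n 0 ≤ n b := by
    intro b hb
    refine le_of_tendsto hrc ?_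
    filter_upwards [Ioo_mem_nhdsGT_of_mem (⟨le_rfl, hb⟩ : (0:ℝ) ∈ Set.Ico 0 b)] with τ hτ
    exact hmono hτ.1 hb hτ.2.le
  intro a b hab
  rcases lt_trichotomy a 0 with ha|ha|ha
  · rw [hz a ha]; exact hnonneg b
  · subst ha
    rcases eq_or_lt_of_le hab with h|h
    · rw [← h]
    · exact h0le b h
  · exact hmono ha (lt_of_lt_of_le ha hab) hab

lemma ratio_tendsto {n : ℝ → ℝ} {δ : ℝ}
    (hpos : ∀ τ : ℝ, 0 < τ → 0 < n τ)
    (hmono : Monotone n)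
    (hlim : ∀ x : ℝ, 0 ≤ x → ∃ L : ℝ, 0 < L ∧
      Filter.Tendsto (fun t : ℝ => n (t - x) / n t) Filter.atTop (nhds L))
    (hδlim : Filter.Tendsto (fun t : ℝ => Real.log (n t) / t) Filter.atTop (nhds δ))
    (hδpos : 0 < δ) :
    ∀ x : ℝ, 0 ≤ x →
      Filter.Tendsto (fun t : ℝ => n (t - x) / n t) Filter.atTop
        (nhds (Real.exp (-δ * x))) := by
  classical
  set L : ℝ → ℝ := fun x => if h : 0 ≤ x then (hlim x h).choose else 0 with hLdef
  have hLpos : ∀ x, 0 ≤ x → 0 < L x := by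
    intro x hx; simp only [hLdef, dif_pos hx]; exact (hlim x hx).choose_spec.1
  have hLtend : ∀ x, 0 ≤ x →
      Tendsto (fun t : ℝ => n (t - x) / n t) atTop (nhds (L x)) := by
    intro x hx; simp only [hLdef, dif_pos hx]; exact (hlim x hx).choose_spec.2
  -- multiplicativity
  have hmul : ∀ x y : ℝ, 0 ≤ x → 0 ≤ y → L (x + y) = L x * L y := by
    intro x y hx hy
    have hshift : Tendsto (fun t : ℝ => t - y) atTop atTop :=
      (tendsto_atTop_add_const_right atTop (-y) tendsto_id).congr
        (fun t => (sub_eq_add_neg t y).symm)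
    have h1 : Tendsto (fun t : ℝ => n (t - y - x) / n (t - y)) atTop (nhds (L x)) :=
      (hLtend x hx).comp hshift
    have h3 := h1.mul (hLtend y hy)
    have h4 : (fun t : ℝ => n (t - y - x) / n (t - y) * (n (t - y) / n t)) =ᶠ[atTop]
        (fun t => n (t - (x + y)) / n t) := by
      filter_upwards [eventually_gt_atTop y] with t ht
      have hne : n (t - y) ≠ 0 := ne_of_gt (hpos _ (by linarith))
      rw [show t - (x + y) = t - y - x by ring]
      field_simp
    exact (tendsto_nhds_unique (h3.congr' h4) (hLtend (x + y) (by linarith))).symm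
  -- antitonicity
  have hanti : ∀ x y : ℝ, 0 ≤ x → x ≤ y → L y ≤ L x := by
    intro x y hx hxy
    refine le_of_tendsto_of_tendsto (hLtend y (hx.trans hxy)) (hLtend x hx) ?_
    filter_upwards [eventually_gt_atTop 0] with t ht
    have := hmono (show t - y ≤ t - x by linarith)
    exact div_le_div_of_nonneg_right this (hpos t ht).le
  -- L 0 = 1
  have hL0 : L 0 = 1 := by
    have h1 : Tendsto (fun t : ℝ => n (t - 0) / n t) atTop (nhds 1) := by
      refine tendsto_const_nhds.congr' ?_
      filter_upwards [eventually_gt_atTop 0] with t ht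
      rw [sub_zero, div_self (hpos t ht).ne']
    exact tendsto_nhds_unique h1 (hLtend 0 le_rfl) |>.symm
  -- identification of L 1
  have hL1 : L 1 = Real.exp (-δ) := by
    have hcast : Tendsto (fun k : ℕ => (k : ℝ) + 1) atTop atTop :=
      tendsto_atTop_add_const_right atTop 1 tendsto_natCast_atTop_atTop
    have hn1 : Tendsto (fun k : ℕ => n (k : ℝ) / n ((k : ℝ) + 1)) atTop (nhds (L 1)) := by
      have h := (hLtend 1 zero_le_one).comp hcast
      refine h.congr fun k => ?_
      simp [Function.comp]
    set f : ℕ → ℝ := fun k => Real.log (n (k : ℝ)) with hf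
    have hu : Tendsto (fun k : ℕ => f (k + 1) - f k) atTop (nhds (-Real.log (L 1))) := by
      have hlog : Tendsto (fun k : ℕ => Real.log (n (k:ℝ) / n ((k:ℝ) + 1))) atTop
          (nhds (Real.log (L 1))) :=
        ((Real.continuousAt_log (ne_of_gt (hLpos 1 zero_le_one))).tendsto).comp hn1
      refine hlog.neg.congr' ?_
      filter_upwards [eventually_ge_atTop 1] with k hk
      have hk' : (0:ℝ) < (k:ℝ) := by exact_mod_cast hk
      have h1 : 0 < n (k : ℝ) := hpos _ hk'
      have h2 : 0 < n ((k : ℝ) + 1) := hpos _ (by linarith)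
      simp only [hf]
      rw [Real.log_div h1.ne' h2.ne']
      push_cast
      ring
    have hc := hu.cesaro
    have hc2 : Tendsto (fun k : ℕ => (k:ℝ)⁻¹ * (f k - f 0)) atTop
        (nhds (-Real.log (L 1))) := by
      refine hc.congr fun k => ?_
      rw [Finset.sum_range_sub f k]
    have h0 : Tendsto (fun k : ℕ => (k:ℝ)⁻¹ * f 0) atTop (nhds 0) := by
      simpa using (tendsto_inv_atTop_nhds_zero_nat (𝕜 := ℝ)).mul_const (f 0)
    have hc3 : Tendsto (fun k : ℕ => (k:ℝ)⁻¹ * f k) atTop (nhds (-Real.log (L 1))) := by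
      have h := hc2.add h0
      rw [add_zero] at h
      refine h.congr fun k => by ring
    have hδn : Tendsto (fun k : ℕ => (k:ℝ)⁻¹ * f k) atTop (nhds δ) := by
      have h := hδlim.comp tendsto_natCast_atTop_atTop
      exact h.congr fun k => div_eq_inv_mul _ _
    have hlogL1 : Real.log (L 1) = -δ := by
      have := tendsto_nhds_unique hc3 hδn
      linarith
    rw [← Real.exp_log (hLpos 1 zero_le_one), hlogL1]
  -- powers
  have hLpow : ∀ x : ℝ, 0 ≤ x → ∀ k : ℕ, L ((k:ℝ) * x) = L x ^ k := by
    intro x hx k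
    induction k with
    | zero => simpa using hL0
    | succ k ih =>
      push_cast
      rw [show ((k:ℝ)+1) * x = (k:ℝ)*x + x by ring,
        hmul _ _ (by positivity) hx, ih, pow_succ]
  have hLnat : ∀ p : ℕ, L (p:ℝ) = Real.exp (-δ * p) := by
    intro p
    have h := hLpow 1 zero_le_one p
    rw [mul_one] at h
    rw [h, hL1, ← Real.exp_nat_mul]
    ring_nf
  have hLrat : ∀ p q : ℕ, 0 < q → L ((p:ℝ)/(q:ℝ)) = Real.exp (-δ * ((p:ℝ)/(q:ℝ))) := by
    intro p q hq
    have hq' : (0:ℝ) < q := by exact_mod_cast hq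
    have h1 : L ((p:ℝ)/(q:ℝ)) ^ q = Real.exp (-δ * p) := by
      rw [← hLpow _ (by positivity) q, show (q:ℝ)*((p:ℝ)/(q:ℝ)) = (p:ℝ) by field_simp]
      exact hLnat p
    have hLq := hLpos ((p:ℝ)/(q:ℝ)) (by positivity)
    have h2 : (q:ℝ) * Real.log (L ((p:ℝ)/q)) = -δ * p := by
      rw [← Real.log_pow, h1, Real.log_exp]
    have h3 : Real.log (L ((p:ℝ)/q)) = -δ * ((p:ℝ)/q) := by
      field_simp
      linarith
    rw [← Real.exp_log hLq, h3]
  -- general nonnegative x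
  have hLgen : ∀ x : ℝ, 0 ≤ x → L x = Real.exp (-δ * x) := by
    intro x hx
    have key : ∀ q : ℕ, 0 < q → |Real.log (L x) + δ * x| ≤ δ / q := by
      intro q hq
      have hq' : (0:ℝ) < q := by exact_mod_cast hq
      set p := ⌊(q:ℝ) * x⌋₊ with hp
      have hp1 : (p:ℝ) ≤ (q:ℝ) * x := Nat.floor_le (by positivity)
      have hp2 : (q:ℝ) * x < (p:ℝ) + 1 := Nat.lt_floor_add_one _
      have hx1 : (p:ℝ)/q ≤ x := by rw [div_le_iff₀ hq']; nlinarith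
      have hx2 : x ≤ ((p:ℝ)+1)/q := by rw [le_div_iff₀ hq']; nlinarith
      have hb1 : L x ≤ Real.exp (-δ * ((p:ℝ)/q)) := by
        rw [← hLrat p q hq]; exact hanti _ _ (by positivity) hx1
      have hb2 : Real.exp (-δ * (((p:ℝ)+1)/q)) ≤ L x := by
        have h := hanti x (((p:ℝ)+1)/q) hx hx2
        rw [show ((p:ℝ)+1) = (((p+1:ℕ)):ℝ) by push_cast; ring] at *
        rwa [hLrat (p+1) q hq] at h
      have hlx := hLpos x hx
      have hlog1 : Real.log (L x) ≤ -δ * ((p:ℝ)/q) :=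
        (Real.log_le_iff_le_exp hlx).2 hb1
      have hlog2 : -δ * (((p:ℝ)+1)/q) ≤ Real.log (L x) :=
        (Real.le_log_iff_exp_le hlx).2 hb2
      have e1 : δ * ((p:ℝ)/q) ≤ δ * x := mul_le_mul_of_nonneg_left hx1 hδpos.le
      have e2 : δ * x ≤ δ * (((p:ℝ)+1)/q) := mul_le_mul_of_nonneg_left hx2 hδpos.le
      have e3 : δ * (((p:ℝ)+1)/q) - δ * ((p:ℝ)/q) = δ / q := by
        field_simp
        ring
      rw [abs_le]
      constructor <;> linarith
    have h0' : Tendsto (fun q : ℕ => δ / (q:ℝ)) atTop (nhds 0) :=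
      tendsto_const_div_atTop_nhds_zero_nat δ
    have habs : |Real.log (L x) + δ * x| ≤ 0 := by
      refine ge_of_tendsto h0' ?_
      filter_upwards [eventually_gt_atTop 0] with q hq
      exact key q hq
    have heq : Real.log (L x) = -(δ * x) := by
      have h0 := abs_eq_zero.1 (le_antisymm habs (abs_nonneg _))
      linarith
    rw [← Real.exp_log (hLpos x hx), heq, neg_mul]
  intro x hx
  have h := hLtend x hx
  rwa [hLgen x hx] at h

lemma integral_exp_neg_mul_Ioi_zero {b : ℝ} (hb : 0 < b) :
    ∫ s in Set.Ioi (0:ℝ), Real.exp (-b*s) = 1/b := by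
  have hderiv : ∀ x ∈ Set.Ici (0:ℝ),
      HasDerivAt (fun x => -Real.exp (-b*x)/b) (Real.exp (-b*x)) x := by
    intro x _
    have h1 : HasDerivAt (fun x : ℝ => -b*x) (-b) x := by
      simpa using (hasDerivAt_id x).const_mul (-b)
    have h2 := (h1.exp).neg.div_const b
    convert h2 using 1
    · rfl
    · rfl
    · rfl
    · rw [eq_div_iff hb.ne']; ring
  have htend : Tendsto (fun x => -Real.exp (-b*x)/b) atTop (nhds 0) := by
    have h1 : Tendsto (fun x : ℝ => -b*x) atTop atBot := by
      have := tendsto_neg_atTop_atBot.comp (tendsto_id.const_mul_atTop hb)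
      exact this.congr fun x => by simp [Function.comp, neg_mul]
    have h2 := (Real.tendsto_exp_atBot.comp h1).neg.div_const b
    simpa using h2
  have h := MeasureTheory.integral_Ioi_of_hasDerivAt_of_tendsto' hderiv
    (exp_neg_integrableOn_Ioi 0 hb) htend
  rw [h]
  rw [mul_zero, Real.exp_zero]
  ring

set_option maxHeartbeats 1000000 in
lemma main_aux {n : ℝ → ℝ} {δ : ℝ}
    (hpos : ∀ τ : ℝ, 0 < τ → 0 < n τ)
    (hnonneg : ∀ τ : ℝ, 0 ≤ n τ)
    (hmono : Monotone n)
    (hrat : ∀ x : ℝ, 0 ≤ x →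
      Tendsto (fun t : ℝ => n (t - x) / n t) atTop (nhds (Real.exp (-δ * x))))
    (hδpos : 0 < δ) {η : ℝ} (hη0 : 0 ≤ η) (hηδ : η < δ) :
    Tendsto (fun t : ℝ =>
        Real.exp (η*t) * (∫ τ in (0:ℝ)..t, n τ * Real.exp (-η*τ)) / n t)
      atTop (nhds (1/(δ - η))) := by
  set γ : ℝ := (η + δ)/2 with hγ
  have hγη : η < γ := by rw [hγ]; linarith
  have hγδ : γ < δ := by rw [hγ]; linarith
  have hγpos : 0 < γ := by linarith
  -- step bound
  have hev : ∀ᶠ t in atTop, n (t-1)/n t < Real.exp (-γ) :=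
    (hrat 1 zero_le_one).eventually_lt_const
      (Real.exp_lt_exp.2 (by linarith : -δ * 1 < -γ))
  obtain ⟨T₀, hT₀⟩ := eventually_atTop.1 hev
  set T : ℝ := max T₀ 1 with hT
  have hT1 : (1:ℝ) ≤ T := le_max_right _ _
  have key : ∀ t : ℝ, T ≤ t → n (t-1) ≤ Real.exp (-γ) * n t := by
    intro t ht
    have hnt : 0 < n t := hpos t (by linarith)
    have := hT₀ t (le_trans (le_max_left _ _) ht)
    rw [div_lt_iff₀ hnt] at this
    linarith
  -- iterated bound
  have B2 : ∀ k : ℕ, ∀ t s : ℝ, T ≤ t → (k:ℝ) ≤ s → s < (k:ℝ)+1 → s ≤ t - T →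
      n (t - s) ≤ Real.exp (-γ * k) * n t := by
    intro k
    induction k with
    | zero =>
      intro t s hTt hks hsk hst
      simp only [Nat.cast_zero, mul_zero, Real.exp_zero, one_mul] at *
      exact hmono (show t - s ≤ t by linarith)
    | succ k ih =>
      intro t s hTt hks hsk hst
      push_cast at hks hsk ⊢
      have hk0 : (0:ℝ) ≤ (k:ℝ) := Nat.cast_nonneg k
      have h1 : (1:ℝ) ≤ s := by linarith
      have hT' : T ≤ t - 1 := by linarith
      have h2 := ih (t-1) (s-1) hT' (by linarith) (by linarith) (by linarith)
      rw [show t - 1 - (s - 1) = t - s by ring] at h2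
      have h3 := key t hTt
      calc n (t-s) ≤ Real.exp (-γ*k) * (Real.exp (-γ) * n t) :=
            h2.trans (mul_le_mul_of_nonneg_left h3 (Real.exp_pos _).le)
        _ = Real.exp (-γ*((k:ℝ)+1)) * n t := by
            rw [← mul_assoc, ← Real.exp_add]; ring_nf
  have P1 : ∀ t s : ℝ, T ≤ t → 0 ≤ s → s ≤ t - T →
      n (t - s) ≤ Real.exp γ * Real.exp (-γ*s) * n t := by
    intro t s hTt hs hst
    have hk1 : (⌊s⌋₊:ℝ) ≤ s := Nat.floor_le hs
    have hk2 : s < (⌊s⌋₊:ℝ) + 1 := Nat.lt_floor_add_one s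
    refine (B2 ⌊s⌋₊ t s hTt hk1 hk2 hst).trans ?_
    have h : Real.exp (-γ*(⌊s⌋₊:ℝ)) ≤ Real.exp γ * Real.exp (-γ*s) := by
      rw [← Real.exp_add]
      exact Real.exp_le_exp.2 (by nlinarith)
    exact mul_le_mul_of_nonneg_right h (hnonneg t)
  have B3 : ∀ t s : ℝ, T ≤ t → 0 ≤ s → s ≤ t →
      n (t - s) ≤ Real.exp (γ*(T+1)) * Real.exp (-γ*s) * n t := by
    intro t s hTt hs hst
    rcases le_or_gt s (t - T) with h|h
    · refine (P1 t s hTt hs h).trans ?_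
      have h1 : Real.exp γ ≤ Real.exp (γ*(T+1)) := Real.exp_le_exp.2 (by nlinarith)
      exact mul_le_mul_of_nonneg_right
        (mul_le_mul_of_nonneg_right h1 (Real.exp_pos _).le) (hnonneg t)
    · have hts : n (t - s) ≤ n T := hmono (by linarith)
      have h2 : n T ≤ Real.exp γ * Real.exp (-γ*(t-T)) * n t := by
        have h := P1 t (t-T) hTt (by linarith) le_rfl
        rwa [show t - (t-T) = T by ring] at h
      refine hts.trans (h2.trans ?_)
      have h3 : Real.exp γ * Real.exp (-γ*(t-T)) ≤
          Real.exp (γ*(T+1)) * Real.exp (-γ*s) := by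
        rw [← Real.exp_add, ← Real.exp_add]
        exact Real.exp_le_exp.2 (by nlinarith)
      exact mul_le_mul_of_nonneg_right h3 (hnonneg t)
  -- dominated convergence setup
  set μ : Measure ℝ := volume.restrict (Set.Ioi 0) with hμ
  set F : ℝ → ℝ → ℝ :=
    fun t => Set.indicator (Set.Iic t) (fun s => n (t-s) * Real.exp (η*s) / n t) with hF
  set bound : ℝ → ℝ :=
    fun s => Real.exp (γ*(T+1)) * Real.exp (-(γ-η)*s) with hbd
  have hmeasn : Measurable n := hmono.measurable
  have hFmeas : ∀ t : ℝ, AEStronglyMeasurable (F t) μ := by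
    intro t
    refine (Measurable.indicator ?_ measurableSet_Iic).aestronglyMeasurable
    exact ((hmeasn.comp (measurable_const.sub measurable_id)).mul
      (Real.measurable_exp.comp (measurable_id.const_mul η))).div_const _
  have h_bound : ∀ᶠ t in atTop, ∀ᵐ s ∂μ, ‖F t s‖ ≤ bound s := by
    filter_upwards [eventually_ge_atTop T] with t hTt
    rw [hμ, ae_restrict_iff' measurableSet_Ioi]
    refine ae_of_all _ fun s hs => ?_
    have hs0 : (0:ℝ) < s := hs
    by_cases hsc : s ≤ t
    · rw [hF]
      simp only
      rw [Set.indicator_of_mem (Set.mem_Iic.2 hsc)]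
      have hnt : 0 < n t := hpos t (by linarith)
      have hb := B3 t s hTt hs0.le hsc
      rw [Real.norm_eq_abs,
        abs_of_nonneg (div_nonneg (mul_nonneg (hnonneg _) (Real.exp_pos _).le) hnt.le)]
      rw [div_le_iff₀ hnt]
      calc n (t-s) * Real.exp (η*s)
          ≤ (Real.exp (γ*(T+1)) * Real.exp (-γ*s) * n t) * Real.exp (η*s) :=
            mul_le_mul_of_nonneg_right hb (Real.exp_pos _).le
        _ = Real.exp (γ*(T+1)) * (Real.exp (-γ*s) * Real.exp (η*s)) * n t := by ring
        _ = bound s * n t := by rw [hbd, ← Real.exp_add]; ring_nf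
    · rw [hF]
      simp only
      rw [Set.indicator_of_notMem (show s ∉ Set.Iic t from fun hm => hsc (Set.mem_Iic.1 hm))]
      simp only [norm_zero]
      positivity
  have hbint : Integrable bound μ := by
    rw [hμ, hbd]
    exact ((exp_neg_integrableOn_Ioi 0 (show 0 < γ - η by linarith)).const_mul _)
  have hlim0 : ∀ᵐ s ∂μ, Tendsto (fun t => F t s) atTop (nhds (Real.exp (-(δ-η)*s))) := by
    rw [hμ, ae_restrict_iff' measurableSet_Ioi]
    refine ae_of_all _ fun s hs => ?_
    have hs0 : (0:ℝ) < s := hs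
    have h1 : Tendsto (fun t : ℝ => n (t - s)/n t * Real.exp (η*s)) atTop
        (nhds (Real.exp (-δ*s) * Real.exp (η*s))) := (hrat s hs0.le).mul_const _
    have h2 : Real.exp (-δ*s) * Real.exp (η*s) = Real.exp (-(δ-η)*s) := by
      rw [← Real.exp_add]; ring_nf
    rw [h2] at h1
    refine h1.congr' ?_
    filter_upwards [eventually_ge_atTop s] with t hts
    rw [hF]
    simp only
    rw [Set.indicator_of_mem (Set.mem_Iic.2 hts)]
    exact div_mul_eq_mul_div _ _ _
  have hDCT := tendsto_integral_filter_of_dominated_convergence bound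
    (Eventually.of_forall hFmeas) h_bound hbint hlim0
  have hval : (∫ s, Real.exp (-(δ-η)*s) ∂μ) = 1/(δ-η) := by
    rw [hμ]
    exact integral_exp_neg_mul_Ioi_zero (by linarith)
  rw [hval] at hDCT
  refine hDCT.congr' ?_
  filter_upwards [eventually_ge_atTop (1:ℝ)] with t ht
  have ht0 : (0:ℝ) ≤ t := by linarith
  have hnt : 0 < n t := hpos t (by linarith)
  rw [hμ, hF]
  simp only
  rw [integral_indicator measurableSet_Iic,
    Measure.restrict_restrict measurableSet_Iic,
    show Set.Iic t ∩ Set.Ioi 0 = Set.Ioc 0 t from by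
      rw [Set.inter_comm, Set.Ioi_inter_Iic],
    ← intervalIntegral.integral_of_le ht0,
    intervalIntegral.integral_div]
  congr 1
  have h1 : (∫ s in (0:ℝ)..t, n (t - s) * Real.exp (η*s))
      = ∫ s in (0:ℝ)..t, (fun τ => n τ * Real.exp (η*(t - τ))) (t - s) := by
    refine intervalIntegral.integral_congr fun s hs => ?_
    simp only
    rw [show t - (t - s) = s by ring]
  rw [h1, intervalIntegral.integral_comp_sub_left (fun τ => n τ * Real.exp (η*(t-τ))) t,
    sub_self, sub_zero]
  have h2 : (∫ τ in (0:ℝ)..t, n τ * Real.exp (η*(t-τ)))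
      = ∫ τ in (0:ℝ)..t, Real.exp (η*t) * (n τ * Real.exp (-η*τ)) := by
    refine intervalIntegral.integral_congr fun τ _ => ?_
    rw [show η*(t-τ) = η*t + -η*τ by ring, Real.exp_add]
    ring
  rw [h2, intervalIntegral.integral_const_mul]

end Aux

open Filter Real intervalIntegral

/-- Assumption 1 on the wild-type growth function `n`. -/
def Assumption1 (n : ℝ → ℝ) : Prop :=
  (∀ τ : ℝ, τ < 0 → n τ = 0) ∧
  ContinuousOn n (Set.Ioi 0) ∧
  Filter.Tendsto n (nhdsWithin 0 (Set.Ioi 0)) (nhds (n 0)) ∧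
  (∀ τ : ℝ, 0 < τ → 0 < n τ) ∧
  MonotoneOn n (Set.Ioi 0) ∧
  (∀ x : ℝ, 0 ≤ x → ∃ L : ℝ, 0 < L ∧
    Filter.Tendsto (fun t : ℝ => n (t - x) / n t) Filter.atTop (nhds L))

/-- For exponential-type growth (`δ* > 0`) and `0 ≤ η < δ*`,
`∫_0^t n_τ e^{−ητ} dτ ∼ n_t e^{−ηt}/(δ*−η)` as `t → ∞`; in particular (η = 0)
`n_t/a_t → δ*`. -/
theorem integral_asymptotics_exponential_type
    (n : ℝ → ℝ) (hn : Assumption1 n) (δ : ℝ)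
    (hδlim : Filter.Tendsto (fun t : ℝ => Real.log (n t) / t) Filter.atTop (nhds δ))
    (hδpos : 0 < δ) (η : ℝ) (hη0 : 0 ≤ η) (hηδ : η < δ) :
    Filter.Tendsto
      (fun t : ℝ =>
        (δ - η) * Real.exp (η * t) * (∫ τ in (0:ℝ)..t, n τ * Real.exp (-η * τ)) / n t)
      Filter.atTop (nhds 1) ∧
    Filter.Tendsto (fun t : ℝ => n t / ∫ τ in (0:ℝ)..t, n τ) Filter.atTop (nhds δ) := by
  obtain ⟨hz, hcont, hrc, hpos, hmonoOn, hlim⟩ := hn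
  have hmono : Monotone n := A1.mono hz hrc hpos hmonoOn
  have hnonneg : ∀ τ : ℝ, 0 ≤ n τ := by
    intro τ
    rcases lt_or_ge τ 0 with h|h
    · rw [hz τ h]
    · calc (0:ℝ) = n (-1) := (hz _ (by norm_num)).symm
        _ ≤ n τ := hmono (by linarith)
  have hrat := ratio_tendsto hpos hmono hlim hδlim hδpos
  constructor
  · have h1 := main_aux hpos hnonneg hmono hrat hδpos hη0 hηδ
    have h2 := h1.const_mul (δ - η)
    rw [mul_one_div, div_self (show δ - η ≠ 0 by linarith)] at h2
    exact h2.congr fun t => by ring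
  · have h0 := main_aux hpos hnonneg hmono hrat hδpos le_rfl hδpos (η := 0)
    simp only [zero_mul, neg_zero, Real.exp_zero, one_mul, mul_one, sub_zero] at h0
    have h1 := h0.inv₀ (show (1/δ : ℝ) ≠ 0 by positivity)
    rw [one_div, inv_inv] at h1
    exact h1.congr fun t => inv_div _ _
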